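/- A graph G is a line graph of some graph if and only if the edges of G can be partitioned into cliques such that every vertex of G belongs to at most two of the cliques. As a corollary, the claw K_{1,3} is not a line graph of any graph. -/

import Mathlib

attribute [local instance] Classical.propDecidable

/-- The line graph of a simple graph `G`. -/
def lineGraph {V : Type*} (G : SimpleGraph V) : SimpleGraph G.edgeSet where
  Adj a b := a ≠ b ∧ ∃ v : V, v ∈ (a : Sym2 V) ∧ v ∈ (b : Sym2 V)
  symm := by
    constructor
    rintro a b ⟨h, v, hv1, hv2⟩
    exact ⟨h.symm, v, hv2, hv1⟩
  loopless := by
    constructor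
    rintro a ⟨h, -⟩
    exact h rfl

/-- The claw `K_{1,3}`: vertex `0` joined to the three leaves `1`, `2`, `3`. -/
def claw : SimpleGraph (Fin 4) where
  Adj a b := a ≠ b ∧ (a = 0 ∨ b = 0)
  symm := by
    constructor
    rintro a b ⟨h, hab⟩
    exact ⟨h.symm, hab.symm⟩
  loopless := by
    constructor
    rintro a ⟨h, -⟩
    exact h rfl
lemma krausz_forward {V : Type} [Fintype V] [DecidableEq V] (G : SimpleGraph V)
    {W : Type} (H : SimpleGraph W) (f : G ≃g lineGraph H) :
    ∃ C : Finset (Finset V),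
      (∀ c ∈ C, G.IsClique (c : Set V)) ∧
      (∀ e ∈ G.edgeFinset, ∃! c, c ∈ C ∧ ∀ v ∈ e, v ∈ c) ∧
      (∀ v : V, (C.filter (fun c => v ∈ c)).card ≤ 2) := by
  classical
  set cw : W → Finset V := fun w => Finset.univ.filter (fun v => w ∈ ((f v : H.edgeSet) : Sym2 W)) with hcw
  refine ⟨Finset.univ.filter (fun c => ∃ w, c = cw w), ?_, ?_, ?_⟩
  · rintro c hc
    obtain ⟨w, rfl⟩ := (Finset.mem_filter.mp hc).2
    intro u hu v hv huv
    simp only [hcw, Finset.coe_filter, Set.mem_setOf_eq, Finset.mem_univ, true_and] at hu hv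
    have hne : f u ≠ f v := fun h => huv (f.injective h)
    have : (lineGraph H).Adj (f u) (f v) := ⟨hne, w, hu, hv⟩
    exact f.map_rel_iff.mp this
  · intro e he
    rw [SimpleGraph.mem_edgeFinset] at he
    induction e with
    | _ u v =>
      have hadj : G.Adj u v := he
      have hlg : (lineGraph H).Adj (f u) (f v) := f.map_rel_iff.mpr hadj
      obtain ⟨hfne, w, hwu, hwv⟩ := hlg
      refine ⟨cw w, ⟨Finset.mem_filter.mpr ⟨Finset.mem_univ _, w, rfl⟩, ?_⟩, ?_⟩
      · intro x hx
        rw [Sym2.mem_iff] at hx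
        rcases hx with rfl | rfl <;>
          simp only [hcw, Finset.mem_filter, Finset.mem_univ, true_and] <;> assumption
      · rintro c ⟨hc, hce⟩
        obtain ⟨w', rfl⟩ := (Finset.mem_filter.mp hc).2
        have hu' : w' ∈ ((f u : H.edgeSet) : Sym2 W) := by
          have := hce u (Sym2.mem_mk_left u v)
          simpa [hcw] using this
        have hv' : w' ∈ ((f v : H.edgeSet) : Sym2 W) := by
          have := hce v (Sym2.mem_mk_right u v)
          simpa [hcw] using this
        by_cases hww : w' = w
        · subst hww; rfl
        · exfalso
          have h1 : ((f u : H.edgeSet) : Sym2 W) = s(w', w) :=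
            (Sym2.mem_and_mem_iff hww).mp ⟨hu', hwu⟩
          have h2 : ((f v : H.edgeSet) : Sym2 W) = s(w', w) :=
            (Sym2.mem_and_mem_iff hww).mp ⟨hv', hwv⟩
          exact hfne (Subtype.ext (h1.trans h2.symm))
  · intro v
    obtain ⟨⟨a, b⟩, hab⟩ := Quot.exists_rep ((f v : H.edgeSet) : Sym2 W)
    have hab' : s(a, b) = ((f v : H.edgeSet) : Sym2 W) := hab
    have hsub : (Finset.univ.filter (fun c => ∃ w, c = cw w)).filter (fun c => v ∈ c)
        ⊆ ({a, b} : Finset W).image cw := by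
      intro c hc
      rw [Finset.mem_filter] at hc
      obtain ⟨hc1, hcv⟩ := hc
      obtain ⟨w, rfl⟩ := (Finset.mem_filter.mp hc1).2
      have hw : w ∈ ((f v : H.edgeSet) : Sym2 W) := by
        simpa [hcw] using hcv
      rw [← hab', Sym2.mem_iff] at hw
      apply Finset.mem_image.mpr
      exact ⟨w, by simp [hw], rfl⟩
    calc _ ≤ (({a, b} : Finset W).image cw).card := Finset.card_le_card hsub
      _ ≤ ({a, b} : Finset W).card := Finset.card_image_le
      _ ≤ 2 := Finset.card_insert_le _ _ |>.trans (by simp)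

lemma krausz_reverse {V : Type} [Fintype V] [DecidableEq V] (G : SimpleGraph V)
    (C : Finset (Finset V))
    (hclique : ∀ c ∈ C, G.IsClique (c : Set V))
    (hedge : ∀ e ∈ G.edgeFinset, ∃! c, c ∈ C ∧ ∀ v ∈ e, v ∈ c)
    (hcard : ∀ v : V, (C.filter (fun c => v ∈ c)).card ≤ 2) :
    ∃ (W : Type) (H : SimpleGraph W), Nonempty (G ≃g lineGraph H) := by
  classical
  set W : Type := Finset V ⊕ (V × Bool) with hW
  have key : ∀ v : V, ∃ p : W × W,
      p.1 ≠ p.2 ∧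
      (∀ q : V × Bool, (Sum.inr q = p.1 ∨ Sum.inr q = p.2) → q.1 = v) ∧
      (∀ c : Finset V, (c ∈ C ∧ v ∈ c) ↔ (Sum.inl c = p.1 ∨ Sum.inl c = p.2)) := by
    intro v
    set S := C.filter (fun c => v ∈ c) with hS
    have hmem : ∀ c, c ∈ S ↔ (c ∈ C ∧ v ∈ c) := by
      intro c; simp [hS, Finset.mem_filter]
    rcases Nat.lt_or_ge S.card 1 with h0 | h1
    · have hSe : S = ∅ := Finset.card_eq_zero.mp (Nat.lt_one_iff.mp h0)
      refine ⟨(Sum.inr (v, false), Sum.inr (v, true)),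
        fun h => by injection h with h'; exact Bool.false_ne_true (congrArg Prod.snd h'), ?_, ?_⟩
      · rintro q (hq | hq) <;> (injection hq with hq'; rw [hq'])
      · intro c
        constructor
        · intro hc
          exact absurd ((hmem c).mpr hc) (by simp [hSe])
        · rintro (h | h) <;> exact absurd h (by simp)
    · rcases Nat.lt_or_ge S.card 2 with h1' | h2
      · have hc1 : S.card = 1 := le_antisymm (Nat.lt_succ_iff.mp h1') h1
        obtain ⟨c1, hc1e⟩ := Finset.card_eq_one.mp hc1
        refine ⟨(Sum.inl c1, Sum.inr (v, false)), by simp, ?_, ?_⟩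
        · rintro q (hq | hq)
          · exact absurd hq (by simp)
          · injection hq with hq'; rw [hq']
        · intro c
          rw [← hmem c, hc1e]
          constructor
          · intro hc; left; rw [Finset.mem_singleton.mp hc]
          · rintro (h | h)
            · injection h with h'; simp [h']
            · exact absurd h (by simp)
      · have hc2 : S.card = 2 := le_antisymm (hcard v) h2
        obtain ⟨c1, c2, hne, hc2e⟩ := Finset.card_eq_two.mp hc2
        refine ⟨(Sum.inl c1, Sum.inl c2), fun h => hne (Sum.inl.inj h), ?_, ?_⟩
        · rintro q (hq | hq) <;> exact absurd hq (by simp)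
        · intro c
          rw [← hmem c, hc2e]
          constructor
          · intro hc
            rcases Finset.mem_insert.mp hc with h | h
            · left; rw [h]
            · right; rw [Finset.mem_singleton.mp h]
          · rintro (h | h) <;> (injection h with h'; simp [h'])
  choose ends hne hinr hinl using key
  set H : SimpleGraph W :=
    { Adj := fun x y => x ≠ y ∧ ∃ v, s(x, y) = s((ends v).1, (ends v).2)
      symm := by
        constructor
        rintro x y ⟨h, v, hv⟩
        exact ⟨h.symm, v, (Sym2.eq_swap).trans hv⟩
      loopless := by constructor; rintro x ⟨h, -⟩; exact h rfl } with hH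
  have hfmem : ∀ v : V, s((ends v).1, (ends v).2) ∈ H.edgeSet := by
    intro v
    exact ⟨hne v, v, rfl⟩
  set f : V → H.edgeSet := fun v => ⟨s((ends v).1, (ends v).2), hfmem v⟩ with hf
  have hmemf : ∀ (v : V) (w : W), w ∈ ((f v : H.edgeSet) : Sym2 W) ↔
      (w = (ends v).1 ∨ w = (ends v).2) := by
    intro v w; exact Sym2.mem_iff
  have hinj : Function.Injective f := by
    intro u v huv
    by_contra huvne
    have hmm : ∀ w : W, w ∈ ((f u : H.edgeSet) : Sym2 W) ↔ w ∈ ((f v : H.edgeSet) : Sym2 W) := by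
      intro w; rw [huv]
    -- endpoints of f u are endpoints of f v
    have h1u : (ends u).1 ∈ ((f v : H.edgeSet) : Sym2 W) :=
      (hmm _).mp ((hmemf u _).mpr (Or.inl rfl))
    have h2u : (ends u).2 ∈ ((f v : H.edgeSet) : Sym2 W) :=
      (hmm _).mp ((hmemf u _).mpr (Or.inr rfl))
    -- case on the form of endpoints of u
    have hcase : ∀ x : W, (x = (ends u).1 ∨ x = (ends u).2) →
        (∃ q : V × Bool, x = Sum.inr q) → False := by
      rintro x hx ⟨q, rfl⟩
      have hqu : q.1 = u := hinr u q (by tauto)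
      have hxv : Sum.inr q ∈ ((f v : H.edgeSet) : Sym2 W) := by
        rcases hx with h | h <;> rw [h]
        · exact h1u
        · exact h2u
      have hqv : q.1 = v := hinr v q (by
        rcases (hmemf v _).mp hxv with h | h
        · exact Or.inl h
        · exact Or.inr h)
      exact huvne (hqu ▸ hqv)
    obtain ⟨c1, hc1⟩ : ∃ c : Finset V, (ends u).1 = Sum.inl c := by
      rcases h : (ends u).1 with c | q
      · exact ⟨c, rfl⟩
      · exact (hcase _ (Or.inl h.symm) ⟨q, rfl⟩).elim
    obtain ⟨c2, hc2⟩ : ∃ c : Finset V, (ends u).2 = Sum.inl c := by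
      rcases h : (ends u).2 with c | q
      · exact ⟨c, rfl⟩
      · exact (hcase _ (Or.inr h.symm) ⟨q, rfl⟩).elim
    have hc1u : c1 ∈ C ∧ u ∈ c1 := (hinl u c1).mpr (Or.inl hc1.symm)
    have hc2u : c2 ∈ C ∧ u ∈ c2 := (hinl u c2).mpr (Or.inr hc2.symm)
    have hc1v : c1 ∈ C ∧ v ∈ c1 := (hinl v c1).mpr (by
      rcases (hmemf v _).mp (hc1 ▸ h1u) with h | h
      · exact Or.inl h
      · exact Or.inr h)
    have hc2v : c2 ∈ C ∧ v ∈ c2 := (hinl v c2).mpr (by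
      rcases (hmemf v _).mp (hc2 ▸ h2u) with h | h
      · exact Or.inl h
      · exact Or.inr h)
    have hc12 : c1 ≠ c2 := by
      intro h; exact hne u (by rw [hc1, hc2, h])
    have hadj : G.Adj u v := hclique c1 hc1u.1 hc1u.2 hc1v.2 huvne
    have hef : s(u, v) ∈ G.edgeFinset := SimpleGraph.mem_edgeFinset.mpr hadj
    obtain ⟨c, -, huniq⟩ := hedge _ hef
    have e1 : c1 = c := huniq c1 ⟨hc1u.1, by
      intro x hx; rcases Sym2.mem_iff.mp hx with rfl | rfl
      · exact hc1u.2
      · exact hc1v.2⟩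
    have e2 : c2 = c := huniq c2 ⟨hc2u.1, by
      intro x hx; rcases Sym2.mem_iff.mp hx with rfl | rfl
      · exact hc2u.2
      · exact hc2v.2⟩
    exact hc12 (e1.trans e2.symm)
  have hsurj : Function.Surjective f := by
    rintro ⟨e, he⟩
    induction e with
    | _ x y =>
      obtain ⟨-, v, hv⟩ := he
      exact ⟨v, Subtype.ext hv.symm⟩
  have hadj_iff : ∀ u v : V, (lineGraph H).Adj (f u) (f v) ↔ G.Adj u v := by
    intro u v
    constructor
    · rintro ⟨hfne, w, hwu, hwv⟩
      have huv : u ≠ v := fun h => hfne (h ▸ rfl)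
      rcases w with c | q
      · have h1 : c ∈ C ∧ u ∈ c := (hinl u c).mpr (by
          rcases (hmemf u _).mp hwu with h | h
          · exact Or.inl h
          · exact Or.inr h)
        have h2 : c ∈ C ∧ v ∈ c := (hinl v c).mpr (by
          rcases (hmemf v _).mp hwv with h | h
          · exact Or.inl h
          · exact Or.inr h)
        exact hclique c h1.1 h1.2 h2.2 huv
      · have h1 : q.1 = u := hinr u q (by
          rcases (hmemf u _).mp hwu with h | h
          · exact Or.inl h
          · exact Or.inr h)
        have h2 : q.1 = v := hinr v q (by
          rcases (hmemf v _).mp hwv with h | h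
          · exact Or.inl h
          · exact Or.inr h)
        exact absurd (h1 ▸ h2) huv
    · intro hadj
      have huv : u ≠ v := hadj.ne
      have hef : s(u, v) ∈ G.edgeFinset := SimpleGraph.mem_edgeFinset.mpr hadj
      obtain ⟨c, ⟨hcC, hcmem⟩, -⟩ := hedge _ hef
      have hcu : u ∈ c := hcmem u (Sym2.mem_mk_left u v)
      have hcv : v ∈ c := hcmem v (Sym2.mem_mk_right u v)
      have hu' := (hinl u c).mp ⟨hcC, hcu⟩
      have hv' := (hinl v c).mp ⟨hcC, hcv⟩
      refine ⟨fun h => huv (hinj h), Sum.inl c, ?_, ?_⟩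
      · exact (hmemf u _).mpr (by tauto)
      · exact (hmemf v _).mpr (by tauto)
  exact ⟨W, H, ⟨⟨Equiv.ofBijective f ⟨hinj, hsurj⟩, hadj_iff _ _⟩⟩⟩

lemma claw_adj_zero (i : Fin 4) (hi : i ≠ 0) : claw.Adj 0 i :=
  ⟨fun h => hi h.symm, Or.inl rfl⟩

lemma claw_not_adj : ¬ claw.Adj 1 2 := by
  rintro ⟨-, h | h⟩ <;> exact absurd h (by decide)

/-- Krausz: A finite graph `G` is the line graph of some graph iff its
edges can be partitioned into cliques such that every vertex belongs to at most two of
the cliques.  As a corollary, the claw `K_{1,3}` is not a line graph of any graph. -/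
theorem stmt19 :
    (∀ (V : Type) [Fintype V] [DecidableEq V] (G : SimpleGraph V),
      (∃ (W : Type) (H : SimpleGraph W), Nonempty (G ≃g lineGraph H)) ↔
      (∃ C : Finset (Finset V),
        (∀ c ∈ C, G.IsClique (c : Set V)) ∧
        (∀ e ∈ G.edgeFinset, ∃! c, c ∈ C ∧ ∀ v ∈ e, v ∈ c) ∧
        (∀ v : V, (C.filter (fun c => v ∈ c)).card ≤ 2))) ∧
    ¬ ∃ (W : Type) (H : SimpleGraph W), Nonempty (claw ≃g lineGraph H) := by
  have main : ∀ (V : Type) [Fintype V] [DecidableEq V] (G : SimpleGraph V),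
      (∃ (W : Type) (H : SimpleGraph W), Nonempty (G ≃g lineGraph H)) ↔
      (∃ C : Finset (Finset V),
        (∀ c ∈ C, G.IsClique (c : Set V)) ∧
        (∀ e ∈ G.edgeFinset, ∃! c, c ∈ C ∧ ∀ v ∈ e, v ∈ c) ∧
        (∀ v : V, (C.filter (fun c => v ∈ c)).card ≤ 2)) := by
    intro V _ _ G
    constructor
    · rintro ⟨W, H, ⟨f⟩⟩
      exact krausz_forward G H f
    · rintro ⟨C, h1, h2, h3⟩
      exact krausz_reverse G C h1 h2 h3
  refine ⟨main, ?_⟩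
  intro hcl
  obtain ⟨C, hclique, hedge, hcard⟩ := (main (Fin 4) claw).mp hcl
  have key : ∀ i : Fin 4, i ≠ 0 → ∃ c, c ∈ C ∧ 0 ∈ c ∧ i ∈ c := by
    intro i hi
    obtain ⟨c, ⟨hcC, hcm⟩, -⟩ :=
      hedge s(0, i) (SimpleGraph.mem_edgeFinset.mpr (claw_adj_zero i hi))
    exact ⟨c, hcC, hcm 0 (Sym2.mem_mk_left _ _), hcm i (Sym2.mem_mk_right _ _)⟩
  obtain ⟨c1, hc1C, hc10, hc11⟩ := key 1 (by decide)
  obtain ⟨c2, hc2C, hc20, hc22⟩ := key 2 (by decide)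
  obtain ⟨c3, hc3C, hc30, hc33⟩ := key 3 (by decide)
  have hdist : ∀ (c : Finset (Fin 4)) (i j : Fin 4), c ∈ C → i ∈ c → j ∈ c →
      i ≠ 0 → j ≠ 0 → i ≠ j → False := by
    intro c i j hcC hic hjc hi0 hj0 hij
    have hadj : claw.Adj i j := hclique c hcC hic hjc hij
    rcases hadj.2 with h | h
    · exact hi0 h
    · exact hj0 h
  have h12 : c1 ≠ c2 := fun h =>
    hdist c1 1 2 hc1C hc11 (h ▸ hc22) (by decide) (by decide) (by decide)
  have h13 : c1 ≠ c3 := fun h =>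
    hdist c1 1 3 hc1C hc11 (h ▸ hc33) (by decide) (by decide) (by decide)
  have h23 : c2 ≠ c3 := fun h =>
    hdist c2 2 3 hc2C hc22 (h ▸ hc33) (by decide) (by decide) (by decide)
  have hsub : ({c1, c2, c3} : Finset (Finset (Fin 4))) ⊆
      C.filter (fun c => (0 : Fin 4) ∈ c) := by
    intro c hc
    simp only [Finset.mem_insert, Finset.mem_singleton] at hc
    rcases hc with rfl | rfl | rfl
    · exact Finset.mem_filter.mpr ⟨hc1C, hc10⟩
    · exact Finset.mem_filter.mpr ⟨hc2C, hc20⟩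
    · exact Finset.mem_filter.mpr ⟨hc3C, hc30⟩
  have hcard3 : ({c1, c2, c3} : Finset (Finset (Fin 4))).card = 3 := by
    rw [Finset.card_insert_of_notMem (by simp [h12, h13]),
      Finset.card_insert_of_notMem (by simp [h23]), Finset.card_singleton]
  have := (hcard3 ▸ Finset.card_le_card hsub).trans (hcard 0)
  omega
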